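/- arXiv:1912.13114 — 3 statements merged into one kernel-verified Lean document; each statement's English description precedes it below -/
import Mathlib

section
/- Let d ≥ 3, let U ⊆ ℝ^d be open, and let σ₀ be a smooth defining function for Σ ⊆ U. Then there exist an open set V with Σ ⊆ V ⊆ U, a smooth defining function σ for Σ on V, and a smooth function B on V such that S(σ) = 1 + σ^d · B on V. (Flat-background case of the theorem that every conformally embedded hypersurface admits a defining density solving the singular Yamabe equation up to an order-d obstruction term.) -/
open RealInnerProductSpace

/-- The flat Euclidean Laplacian of `σ : ℝ^d → ℝ`. -/
noncomputable def flatLaplacian {d : ℕ} (σ : EuclideanSpace ℝ (Fin d) → ℝ)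
    (x : EuclideanSpace ℝ (Fin d)) : ℝ :=
  ∑ i : Fin d, fderiv ℝ (fun y => fderiv ℝ σ y (EuclideanSpace.single i 1)) x
    (EuclideanSpace.single i 1)

/-- The flat S-curvature `S(σ) = ‖∇σ‖² − (2σ/d)Δσ`. -/
noncomputable def Scurv {d : ℕ} (σ : EuclideanSpace ℝ (Fin d) → ℝ)
    (x : EuclideanSpace ℝ (Fin d)) : ℝ :=
  ‖gradient σ x‖ ^ 2 - (2 * σ x / d) * flatLaplacian σ x

/-- `σ` is a smooth defining function for `Z` on `U`: it is smooth on `U`, `Z` is its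
zero set in `U`, and its differential is nonvanishing along `Z`. -/
def IsDefiningFn {d : ℕ} (σ : EuclideanSpace ℝ (Fin d) → ℝ)
    (U Z : Set (EuclideanSpace ℝ (Fin d))) : Prop :=
  ContDiffOn ℝ (⊤ : ℕ∞) σ U ∧ Z = {x ∈ U | σ x = 0} ∧ ∀ x ∈ Z, fderiv ℝ σ x ≠ 0

section Aux

variable {d : ℕ}

local notation "E" => EuclideanSpace ℝ (Fin d)

noncomputable def pd (i : Fin d) (f : E → ℝ) (x : E) : ℝ :=
  fderiv ℝ f x (EuclideanSpace.single i 1)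

lemma contDiffOn_pd {f : E → ℝ} {V : Set E} (hf : ContDiffOn ℝ (⊤ : ℕ∞) f V)
    (hV : IsOpen V) (i : Fin d) : ContDiffOn ℝ (⊤ : ℕ∞) (pd i f) V :=
  (hf.fderiv_of_isOpen hV (by simp)).clm_apply contDiffOn_const

lemma diffAt {f : E → ℝ} {V : Set E} (hf : ContDiffOn ℝ (⊤ : ℕ∞) f V)
    (hV : IsOpen V) {x : E} (hx : x ∈ V) : DifferentiableAt ℝ f x :=
  (hf.contDiffAt (hV.mem_nhds hx)).differentiableAt (by simp)

lemma pd_congr {f g : E → ℝ} {V : Set E} (hV : IsOpen V) (h : Set.EqOn f g V)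
    {x : E} (hx : x ∈ V) (i : Fin d) : pd i f x = pd i g x := by
  have : f =ᶠ[nhds x] g := Filter.eventuallyEq_of_mem (hV.mem_nhds hx) h
  unfold pd
  rw [this.fderiv_eq]

lemma pd_add {f g : E → ℝ} {x : E} (hf : DifferentiableAt ℝ f x)
    (hg : DifferentiableAt ℝ g x) (i : Fin d) :
    pd i (fun y => f y + g y) x = pd i f x + pd i g x := by
  unfold pd; rw [fderiv_fun_add hf hg]; rfl

lemma pd_mul {f g : E → ℝ} {x : E} (hf : DifferentiableAt ℝ f x)
    (hg : DifferentiableAt ℝ g x) (i : Fin d) :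
    pd i (fun y => f y * g y) x = f x * pd i g x + g x * pd i f x := by
  unfold pd; rw [fderiv_fun_mul hf hg]; simp [mul_comm]

lemma pd_const {x : E} (c : ℝ) (i : Fin d) : pd i (fun _ => c) x = 0 := by
  unfold pd; rw [fderiv_fun_const]; rfl

lemma pd_const_mul {f : E → ℝ} {x : E} (hf : DifferentiableAt ℝ f x) (c : ℝ) (i : Fin d) :
    pd i (fun y => c * f y) x = c * pd i f x := by
  rw [pd_mul (differentiableAt_const c) hf, pd_const]; ring

lemma pd_pow {f : E → ℝ} {x : E} (hf : DifferentiableAt ℝ f x) (n : ℕ) (i : Fin d) :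
    pd i (fun y => f y ^ n) x = n * f x ^ (n - 1) * pd i f x := by
  induction n with
  | zero =>
    rw [show (fun y => f y ^ 0) = (fun _ => (1:ℝ)) from funext fun y => pow_zero _, pd_const]
    simp
  | succ m ih =>
    rw [show (fun y => f y ^ (m+1)) = (fun y => f y ^ m * f y) from funext fun y => pow_succ _ _,
      pd_mul (hf.fun_pow m) hf, ih, Nat.add_sub_cancel]
    rcases Nat.eq_zero_or_pos m with hm | hm
    · subst hm; simp
    · have h3 : f x ^ (m - 1) * f x = f x ^ m := by
        rw [← pow_succ, Nat.sub_add_cancel hm]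
      rw [show f x * (↑m * f x ^ (m-1) * pd i f x) = ↑m * (f x ^ (m-1) * f x) * pd i f x by ring,
        h3]
      push_cast; ring

lemma norm_gradient_sq (f : E → ℝ) (x : E) :
    ‖gradient f x‖ ^ 2 = ∑ i : Fin d, (pd i f x) ^ 2 := by
  have h : ∀ i : Fin d, gradient f x i = pd i f x := by
    intro i
    have : ⟪gradient f x, EuclideanSpace.single i 1⟫ = fderiv ℝ f x (EuclideanSpace.single i 1) := by
      rw [gradient, InnerProductSpace.toDual_symm_apply]
    rw [EuclideanSpace.inner_single_right] at this
    simpa [pd] using this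
  rw [EuclideanSpace.norm_eq, Real.sq_sqrt (by positivity)]
  exact Finset.sum_congr rfl fun i _ => by rw [← h i]; simp [sq_abs]

lemma scurv_eq (f : E → ℝ) (x : E) :
    Scurv f x = (∑ i : Fin d, (pd i f x) ^ 2)
      - (2 * f x / d) * ∑ i : Fin d, pd i (pd i f) x := by
  rw [Scurv, norm_gradient_sq, flatLaplacian]; rfl
lemma sum_sq_expand {d : ℕ} (a b : Fin d → ℝ) (s t : ℝ) :
    ∑ i, (s * a i + t * b i)^2
      = s^2 * ∑ i, (a i)^2 + 2*s*t * ∑ i, a i * b i + t^2 * ∑ i, (b i)^2 := by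
  rw [Finset.mul_sum, Finset.mul_sum, Finset.mul_sum, ← Finset.sum_add_distrib,
    ← Finset.sum_add_distrib]
  exact Finset.sum_congr rfl fun i _ => by ring

/-- The invariant of the iteration. -/
def Good (d k : ℕ) (U Z : Set (EuclideanSpace ℝ (Fin d))) : Prop :=
  ∃ (V : Set (EuclideanSpace ℝ (Fin d))) (σ f : EuclideanSpace ℝ (Fin d) → ℝ),
    IsOpen V ∧ Z ⊆ V ∧ V ⊆ U ∧ IsDefiningFn σ V Z ∧
    ContDiffOn ℝ (⊤ : ℕ∞) f V ∧ ∀ x ∈ V, Scurv σ x = 1 + σ x ^ k * f x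

lemma fderiv_eq_zero_of_pd {g : E → ℝ} {x : E}
    (h : ∀ i, pd i g x = 0) : fderiv ℝ g x = 0 := by
  apply ContinuousLinearMap.coe_injective
  apply Module.Basis.ext (EuclideanSpace.basisFun (Fin d) ℝ).toBasis
  intro i
  simpa [OrthonormalBasis.coe_toBasis, EuclideanSpace.basisFun_apply, pd] using h i

lemma base_case (hd : 3 ≤ d) {U Z : Set E} (hU : IsOpen U)
    {σ₀ : E → ℝ} (h₀ : IsDefiningFn σ₀ U Z) : Good d 1 U Z := by
  obtain ⟨hσ₀, hZ, hdσ₀⟩ := h₀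
  set q : E → ℝ := fun x => ∑ i, (pd i σ₀ x)^2 with hq_def
  have hq : ContDiffOn ℝ (⊤ : ℕ∞) q U := by
    apply ContDiffOn.sum
    intro i _
    exact (contDiffOn_pd hσ₀ hU i).pow 2
  set V : Set E := U ∩ q ⁻¹' (Set.Ioi 0) with hV_def
  have hVU : V ⊆ U := Set.inter_subset_left
  have hV : IsOpen V := hq.continuousOn.isOpen_inter_preimage hU isOpen_Ioi
  have hqpos : ∀ x ∈ V, 0 < q x := fun x hx => hx.2
  have hZV : Z ⊆ V := by
    intro x hx
    have hxU : x ∈ U := (hZ ▸ hx).1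
    refine ⟨hxU, ?_⟩
    have hne := hdσ₀ x hx
    by_contra hq0
    simp only [Set.mem_preimage, Set.mem_Ioi, not_lt] at hq0
    have hq0' : q x = 0 := le_antisymm hq0 (by positivity)
    apply hne
    apply fderiv_eq_zero_of_pd
    intro i
    have := Finset.sum_eq_zero_iff_of_nonneg (fun i _ => sq_nonneg (pd i σ₀ x)) |>.1 hq0' i
      (Finset.mem_univ i)
    exact pow_eq_zero_iff (n := 2) (by norm_num) |>.1 this
  -- sqrt and φ
  set sq : E → ℝ := fun x => Real.sqrt (q x) with hsq_def
  have hsq_pos : ∀ x ∈ V, 0 < sq x := fun x hx => Real.sqrt_pos.2 (hqpos x hx)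
  have hsq : ContDiffOn ℝ (⊤ : ℕ∞) sq V := by
    intro x hx
    exact ((Real.contDiffAt_sqrt (ne_of_gt (hqpos x hx))).comp x
      ((hq.contDiffAt (hU.mem_nhds (hVU hx))))).contDiffWithinAt
  set φ : E → ℝ := fun x => (sq x)⁻¹ with hφ_def
  have hφ : ContDiffOn ℝ (⊤ : ℕ∞) φ V := hsq.inv (fun x hx => ne_of_gt (hsq_pos x hx))
  have hφ_pos : ∀ x ∈ V, 0 < φ x := fun x hx => inv_pos.2 (hsq_pos x hx)
  set σ₁ : E → ℝ := fun x => σ₀ x * φ x with hσ₁_def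
  have hσ₀V : ContDiffOn ℝ (⊤ : ℕ∞) σ₀ V := hσ₀.mono hVU
  have hσ₁ : ContDiffOn ℝ (⊤ : ℕ∞) σ₁ V := hσ₀V.mul hφ
  set L : E → ℝ := fun x => ∑ i, pd i (pd i σ₁) x with hL_def
  have hL : ContDiffOn ℝ (⊤ : ℕ∞) L V :=
    ContDiffOn.sum fun i _ => contDiffOn_pd (contDiffOn_pd hσ₁ hV i) hV i
  set f₁ : E → ℝ := fun x => sq x * (σ₀ x * (∑ i, (pd i φ x)^2)
    + 2 * φ x * (∑ i, pd i σ₀ x * pd i φ x) - (2 * φ x / d) * L x) with hf₁_def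
  have hf₁ : ContDiffOn ℝ (⊤ : ℕ∞) f₁ V := by
    apply hsq.mul
    apply ContDiffOn.sub
    · apply ContDiffOn.add
      · exact hσ₀V.mul (ContDiffOn.sum fun i _ => (contDiffOn_pd hφ hV i).pow 2)
      · exact (contDiffOn_const.mul hφ).mul
          (ContDiffOn.sum fun i _ => (contDiffOn_pd hσ₀V hV i).mul (contDiffOn_pd hφ hV i))
    · exact ((contDiffOn_const.mul hφ).div_const _).mul hL
  refine ⟨V, σ₁, f₁, hV, hZV, hVU, ⟨hσ₁, ?_, ?_⟩, hf₁, ?_⟩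
  · -- zero set
    ext x
    constructor
    · intro hx
      refine ⟨hZV hx, ?_⟩
      have : σ₀ x = 0 := (hZ ▸ hx).2
      simp [hσ₁_def, this]
    · rintro ⟨hxV, hx0⟩
      have : σ₀ x = 0 := by
        rcases mul_eq_zero.1 hx0 with h | h
        · exact h
        · exact absurd h (ne_of_gt (hφ_pos x hxV))
      rw [hZ]; exact ⟨hVU hxV, this⟩
  · -- nonvanishing differential
    intro x hx
    have hxV := hZV hx
    have hd₀ : DifferentiableAt ℝ σ₀ x := diffAt hσ₀ hU (hVU hxV)
    have hdφ : DifferentiableAt ℝ φ x := diffAt hφ hV hxV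
    have hx0 : σ₀ x = 0 := (hZ ▸ hx).2
    have : fderiv ℝ σ₁ x = σ₀ x • fderiv ℝ φ x + φ x • fderiv ℝ σ₀ x := fderiv_mul hd₀ hdφ
    rw [this, hx0, zero_smul, zero_add]
    intro hcontra
    exact hdσ₀ x hx (by
      have := smul_eq_zero.1 hcontra
      rcases this with h | h
      · exact absurd h (ne_of_gt (hφ_pos x hxV))
      · exact h)
  · -- the main identity
    intro x hx
    have hd₀ : DifferentiableAt ℝ σ₀ x := diffAt hσ₀ hU (hVU hx)
    have hdφ : DifferentiableAt ℝ φ x := diffAt hφ hV hx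
    rw [scurv_eq]
    have hpd : ∀ i, pd i σ₁ x = σ₀ x * pd i φ x + φ x * pd i σ₀ x := fun i => pd_mul hd₀ hdφ i
    have hsum : ∑ i, (pd i σ₁ x)^2
        = (σ₀ x)^2 * ∑ i, (pd i φ x)^2 + 2*(σ₀ x)*(φ x) * ∑ i, pd i φ x * pd i σ₀ x
          + (φ x)^2 * ∑ i, (pd i σ₀ x)^2 := by
      rw [Finset.sum_congr rfl fun i _ => by rw [hpd i]]
      exact sum_sq_expand _ _ _ _
    have hnorm : (φ x)^2 * q x = 1 := by
      have h1 : (sq x)^2 = q x := Real.sq_sqrt (le_of_lt (hqpos x hx))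
      have h2 : sq x ≠ 0 := ne_of_gt (hsq_pos x hx)
      field_simp [hφ_def]
      simp only [hφ_def, inv_pow, ← h1]
      exact inv_mul_cancel₀ (pow_ne_zero 2 h2)
    have hφsq : φ x * sq x = 1 := inv_mul_cancel₀ (ne_of_gt (hsq_pos x hx))
    have hσ₁x : σ₁ x = σ₀ x * φ x := rfl
    have hcomm : ∑ i, pd i φ x * pd i σ₀ x = ∑ i, pd i σ₀ x * pd i φ x :=
      Finset.sum_congr rfl fun i _ => mul_comm _ _
    rw [hsum, hcomm, hσ₁x, hf₁_def]
    have hqx : (∑ i, (pd i σ₀ x)^2) = q x := rfl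
    rw [hqx]
    have hLx : (∑ i : Fin d, pd i (pd i σ₁) x) = L x := rfl
    rw [hLx]
    -- now pure algebra with hnorm, hφsq
    set Sφ := ∑ i, (pd i φ x)^2
    set Sm := ∑ i, pd i σ₀ x * pd i φ x
    have expand : σ₀ x * φ x * (sq x * (σ₀ x * Sφ + 2 * φ x * Sm - 2 * φ x / ↑d * L x))
        = (φ x * sq x) * (σ₀ x * (σ₀ x * Sφ + 2 * φ x * Sm - 2 * φ x / ↑d * L x)) := by ring
    rw [pow_one, expand, hφsq, one_mul]
    linear_combination hnorm
lemma pd_mul3 {F G H : E → ℝ} {x : E} (hF : DifferentiableAt ℝ F x)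
    (hG : DifferentiableAt ℝ G x) (hH : DifferentiableAt ℝ H x) (i : Fin d) :
    pd i (fun y => F y * G y * H y) x
      = F x * G x * pd i H x + F x * H x * pd i G x + G x * H x * pd i F x := by
  rw [pd_mul (hF.fun_mul hG) hH, pd_mul hF hG]
  ring

lemma sum_lin4 {d : ℕ} (w p q r : ℝ) (e a b F : Fin d → ℝ) :
    ∑ i, (e i * w + (a i)^2 * p + (a i * b i) * q + F i * r)
      = (∑ i, e i) * w + (∑ i, (a i)^2) * p + (∑ i, a i * b i) * q + (∑ i, F i) * r := by
  rw [Finset.sum_mul, Finset.sum_mul, Finset.sum_mul, Finset.sum_mul,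
    ← Finset.sum_add_distrib, ← Finset.sum_add_distrib, ← Finset.sum_add_distrib]

lemma step_case (hd : 3 ≤ d) {U Z : Set E} {k : ℕ} (hk1 : 1 ≤ k) (hkd : k < d)
    (h : Good d k U Z) : Good d (k+1) U Z := by
  obtain ⟨m, rfl⟩ : ∃ m, k = m + 1 := ⟨k - 1, (Nat.succ_pred_eq_of_pos hk1).symm⟩
  obtain ⟨V, σ, f, hV, hZV, hVU, ⟨hσ, hZeq, hdσ⟩, hf, hS⟩ := h
  have hdR : (d:ℝ) ≠ 0 := by positivity
  have hdk : ((m:ℝ) + 1) < (d:ℝ) := by exact_mod_cast hkd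
  set c : ℝ := -(d:ℝ)/(2*((m:ℝ)+2)*((d:ℝ)-((m:ℝ)+1))) with hc_def
  have hc : 1 + 2*c*((m:ℝ)+2)*(1 - ((m:ℝ)+1)/(d:ℝ)) = 0 := by
    rw [hc_def]
    have h1 : (m:ℝ) + 2 ≠ 0 := by positivity
    have h2 : (d:ℝ) - ((m:ℝ)+1) ≠ 0 := by linarith
    field_simp
    ring
  -- the new defining function
  set g : E → ℝ := fun y => c * (σ y ^ (m+2) * f y) with hg_def
  set σ' : E → ℝ := fun y => σ y + g y with hσ'_def
  set v : E → ℝ := fun y => 1 + c * σ y ^ (m+1) * f y with hv_def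
  -- basic differentiability
  have dσ : ∀ x ∈ V, DifferentiableAt ℝ σ x := fun x hx => diffAt hσ hV hx
  have df : ∀ x ∈ V, DifferentiableAt ℝ f x := fun x hx => diffAt hf hV hx
  have dg : ∀ x ∈ V, DifferentiableAt ℝ g x := fun x hx =>
    (differentiableAt_const c).mul (((dσ x hx).pow (m+2)).mul (df x hx))
  have dσ' : ∀ x ∈ V, DifferentiableAt ℝ σ' x := fun x hx => (dσ x hx).add (dg x hx)
  have hσ'V : ContDiffOn ℝ (⊤ : ℕ∞) σ' V :=
    hσ.add ((contDiffOn_const.mul ((hσ.pow (m+2)).mul hf)))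
  have hvV : ContDiffOn ℝ (⊤ : ℕ∞) v V :=
    contDiffOn_const.add ((contDiffOn_const.mul (hσ.pow (m+1))).mul hf)
  -- first derivatives of σ'
  have hpd1 : ∀ x ∈ V, ∀ i : Fin d, pd i σ' x
      = pd i σ x + c*((m:ℝ)+2) * (σ x^(m+1) * f x * pd i σ x) + c * (σ x^(m+2) * pd i f x) := by
    intro x hx i
    have e1 : pd i σ' x = pd i σ x + pd i g x := pd_add (dσ x hx) (dg x hx) i
    have e2 : pd i g x = c * pd i (fun y => σ y ^ (m+2) * f y) x :=
      pd_const_mul (((dσ x hx).pow (m+2)).mul (df x hx)) c i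
    have e3 : pd i (fun y => σ y ^ (m+2) * f y) x
        = σ x^(m+2) * pd i f x + f x * pd i (fun y => σ y ^ (m+2)) x :=
      pd_mul ((dσ x hx).pow (m+2)) (df x hx) i
    have e4 : pd i (fun y => σ y ^ (m+2)) x = ((m:ℝ)+2) * σ x ^ (m+1) * pd i σ x := by
      rw [pd_pow (dσ x hx) (m+2) i]
      have : m + 2 - 1 = m + 1 := by omega
      rw [this]; push_cast; ring
    rw [e1, e2, e3, e4]; ring
  -- the new neighbourhood
  set V' : Set E := V ∩ v ⁻¹' ({(0:ℝ)}ᶜ) with hV'_def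
  have hV'V : V' ⊆ V := Set.inter_subset_left
  have hV' : IsOpen V' := hvV.continuousOn.isOpen_inter_preimage hV isOpen_compl_singleton
  have hvne : ∀ x ∈ V', v x ≠ 0 := fun x hx => hx.2
  have hZV' : Z ⊆ V' := by
    intro x hx
    have hxV : x ∈ V := hZV hx
    have hσ0 : σ x = 0 := (hZeq ▸ hx).2
    refine ⟨hxV, ?_⟩
    simp [hv_def, hσ0]
  -- the correction term f'
  set L : E → ℝ := fun x => ∑ i, pd i (pd i σ) x with hL_def
  set M : E → ℝ := fun x => ∑ i, pd i (pd i f) x with hM_def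
  set Bf : E → ℝ := fun x => ∑ i, pd i σ x * pd i f x with hBf_def
  set Cf : E → ℝ := fun x => ∑ i, (pd i f x)^2 with hCf_def
  have hL : ContDiffOn ℝ (⊤ : ℕ∞) L V :=
    ContDiffOn.sum fun i _ => contDiffOn_pd (contDiffOn_pd hσ hV i) hV i
  have hM : ContDiffOn ℝ (⊤ : ℕ∞) M V :=
    ContDiffOn.sum fun i _ => contDiffOn_pd (contDiffOn_pd hf hV i) hV i
  have hBf : ContDiffOn ℝ (⊤ : ℕ∞) Bf V :=
    ContDiffOn.sum fun i _ => (contDiffOn_pd hσ hV i).mul (contDiffOn_pd hf hV i)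
  have hCf : ContDiffOn ℝ (⊤ : ℕ∞) Cf V :=
    ContDiffOn.sum fun i _ => (contDiffOn_pd hf hV i).pow 2
  set f' : E → ℝ := fun x =>
      -(2*c/(d:ℝ))*f x*L x
      + 2*c*((m:ℝ)+2)*(1-((m:ℝ)+1)/(d:ℝ))*f x*(σ x^m*f x + (2/(d:ℝ))*L x)
      + c^2*((m:ℝ)+2)*(((m:ℝ)+2)-2*((m:ℝ)+1)/(d:ℝ))*σ x^m*(f x)^2
          *(1 + σ x^(m+1)*f x + (2*σ x/(d:ℝ))*L x)
      + 2*(1 + c*((m:ℝ)+2)*σ x^(m+1)*f x)*c*Bf x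
      + c^2*σ x^2*σ x^m*Cf x
      - (2*v x*c*((m:ℝ)+2)/(d:ℝ))*(2*Bf x + f x*L x)
      - (2*v x*c/(d:ℝ))*σ x*M x with hf'_def
  have hf' : ContDiffOn ℝ (⊤ : ℕ∞) f' V := by
    rw [hf'_def]
    fun_prop (disch := intros; exact hdR)
  -- key identity on V
  have key : ∀ x ∈ V, Scurv σ' x = 1 + σ x ^ (m+2) * f' x := by
    intro x hx
    have hA : (∑ i, (pd i σ x)^2)
        = 1 + σ x^(m+1)*f x + (2*σ x/(d:ℝ)) * L x := by
      have h1 := hS x hx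
      rw [scurv_eq] at h1
      rw [hL_def]
      linarith [h1]
    -- first order sum
    have hsum1 : ∑ i, (pd i σ' x)^2
        = (1 + c*((m:ℝ)+2)*σ x^(m+1)*f x)^2 * ∑ i, (pd i σ x)^2
          + 2*(1 + c*((m:ℝ)+2)*σ x^(m+1)*f x)*(c*σ x^(m+2)) * ∑ i, pd i σ x * pd i f x
          + (c*σ x^(m+2))^2 * ∑ i, (pd i f x)^2 := by
      rw [Finset.sum_congr rfl fun i _ => show (pd i σ' x)^2
          = ((1 + c*((m:ℝ)+2)*σ x^(m+1)*f x) * pd i σ x + (c*σ x^(m+2)) * pd i f x)^2 by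
        rw [hpd1 x hx i]; ring]
      exact sum_sq_expand _ _ _ _
    -- second order sum
    have hsecond : ∀ i : Fin d, pd i (pd i σ') x
        = pd i (pd i σ) x * (1 + c*((m:ℝ)+2)*σ x^(m+1)*f x)
          + (pd i σ x)^2 * (c*((m:ℝ)+2)*((m:ℝ)+1)*σ x^m*f x)
          + (pd i σ x * pd i f x) * (2*c*((m:ℝ)+2)*σ x^(m+1))
          + pd i (pd i f) x * (c*σ x^(m+2)) := by
      intro i
      have hEq : Set.EqOn (pd i σ')
          (fun y => pd i σ y + c*((m:ℝ)+2) * (σ y^(m+1) * f y * pd i σ y)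
            + c * (σ y^(m+2) * pd i f y)) V := fun y hy => hpd1 y hy i
      rw [pd_congr hV hEq hx i]
      have dpdσ : DifferentiableAt ℝ (pd i σ) x := diffAt (contDiffOn_pd hσ hV i) hV hx
      have dpdf : DifferentiableAt ℝ (pd i f) x := diffAt (contDiffOn_pd hf hV i) hV hx
      have d2 : DifferentiableAt ℝ (fun y => σ y^(m+1) * f y * pd i σ y) x :=
        (((dσ x hx).pow (m+1)).mul (df x hx)).mul dpdσ
      have d2' : DifferentiableAt ℝ (fun y => c*((m:ℝ)+2) * (σ y^(m+1) * f y * pd i σ y)) x :=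
        (differentiableAt_const _).mul d2
      have d3 : DifferentiableAt ℝ (fun y => σ y^(m+2) * pd i f y) x :=
        ((dσ x hx).pow (m+2)).mul dpdf
      have e1 := pd_add (dpdσ.fun_add d2') ((differentiableAt_const c).fun_mul d3) i
      have e2 := pd_add dpdσ d2' i
      have e3 := pd_const_mul d2 (c*((m:ℝ)+2)) i
      have e4 := pd_mul3 ((dσ x hx).fun_pow (m+1)) (df x hx) dpdσ i
      have e5 := pd_const_mul d3 c i
      have e6 := pd_mul ((dσ x hx).fun_pow (m+2)) dpdf i
      have e7 : pd i (fun y => σ y ^ (m+1)) x = ((m:ℝ)+1) * σ x ^ m * pd i σ x := by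
        rw [pd_pow (dσ x hx) (m+1) i]
        have : m + 1 - 1 = m := by omega
        rw [this]; push_cast; ring
      have e8 : pd i (fun y => σ y ^ (m+2)) x = ((m:ℝ)+2) * σ x ^ (m+1) * pd i σ x := by
        rw [pd_pow (dσ x hx) (m+2) i]
        have : m + 2 - 1 = m + 1 := by omega
        rw [this]; push_cast; ring
      rw [e1, e2, e3, e4, e5, e6, e7, e8]
      ring
    have hsum2 : ∑ i, pd i (pd i σ') x
        = (∑ i, pd i (pd i σ) x) * (1 + c*((m:ℝ)+2)*σ x^(m+1)*f x)
          + (∑ i, (pd i σ x)^2) * (c*((m:ℝ)+2)*((m:ℝ)+1)*σ x^m*f x)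
          + (∑ i, pd i σ x * pd i f x) * (2*c*((m:ℝ)+2)*σ x^(m+1))
          + (∑ i, pd i (pd i f) x) * (c*σ x^(m+2)) := by
      rw [Finset.sum_congr rfl fun i _ => hsecond i]
      exact sum_lin4 _ _ _ _ _ _ _ _
    rw [scurv_eq, hsum1, hsum2, hA]
    have hσ'x : σ' x = σ x + c * (σ x ^ (m+2) * f x) := rfl
    have hvx : v x = 1 + c * σ x ^ (m+1) * f x := rfl
    have hf'x : f' x =
      -(2*c/(d:ℝ))*f x*L x
      + 2*c*((m:ℝ)+2)*(1-((m:ℝ)+1)/(d:ℝ))*f x*(σ x^m*f x + (2/(d:ℝ))*L x)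
      + c^2*((m:ℝ)+2)*(((m:ℝ)+2)-2*((m:ℝ)+1)/(d:ℝ))*σ x^m*(f x)^2
          *(1 + σ x^(m+1)*f x + (2*σ x/(d:ℝ))*L x)
      + 2*(1 + c*((m:ℝ)+2)*σ x^(m+1)*f x)*c*Bf x
      + c^2*σ x^2*σ x^m*Cf x
      - (2*v x*c*((m:ℝ)+2)/(d:ℝ))*(2*Bf x + f x*L x)
      - (2*v x*c/(d:ℝ))*σ x*M x := rfl
    rw [hf'x, hσ'x, hvx, hL_def, hM_def, hBf_def, hCf_def]
    linear_combination (σ x ^ (m+1) * f x) * hc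
  -- assemble
  refine ⟨V', σ', fun x => f' x / (v x)^(m+2), hV', hZV', fun x hx => hVU (hV'V hx),
    ⟨hσ'V.mono hV'V, ?_, ?_⟩, ?_, ?_⟩
  · -- zero set
    ext x
    constructor
    · intro hx
      have hxV' := hZV' hx
      have hσ0 : σ x = 0 := (hZeq ▸ hx).2
      refine ⟨hxV', ?_⟩
      simp [hσ'_def, hg_def, hσ0]
    · rintro ⟨hxV', hx0⟩
      have hxV : x ∈ V := hV'V hxV'
      have hfac : σ' x = σ x * v x := by simp only [hσ'_def, hg_def, hv_def]; ring
      have : σ x = 0 := by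
        rcases mul_eq_zero.1 (hfac ▸ hx0) with h | h
        · exact h
        · exact absurd h (hvne x hxV')
      rw [hZeq]; exact ⟨hxV, this⟩
  · -- nonvanishing differential
    intro x hx
    have hxV : x ∈ V := hZV hx
    have hσ0 : σ x = 0 := (hZeq ▸ hx).2
    intro hcontra
    apply hdσ x hx
    apply fderiv_eq_zero_of_pd
    intro i
    have h1 : pd i σ' x = 0 := by
      show fderiv ℝ σ' x (EuclideanSpace.single i 1) = 0
      rw [hcontra]; rfl
    have h2 := hpd1 x hxV i
    rw [h1, hσ0] at h2
    have hm1 : (0:ℝ) ^ (m+1) = 0 := zero_pow (by omega)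
    have hm2 : (0:ℝ) ^ (m+2) = 0 := zero_pow (by omega)
    rw [hm1, hm2] at h2
    simpa using h2.symm
  · -- smoothness of B
    exact (hf'.mono hV'V).div ((hvV.mono hV'V).pow (m+2))
      (fun x hx => pow_ne_zero _ (hvne x hx))
  · -- final identity
    intro x hx
    have hxV : x ∈ V := hV'V hx
    rw [key x hxV]
    have hfac : σ' x = σ x * v x := by simp only [hσ'_def, hg_def, hv_def]; ring
    have hvp : (v x)^(m+2) ≠ 0 := pow_ne_zero _ (hvne x hx)
    rw [hfac]
    rw [show m + 1 + 1 = m + 2 from rfl]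
    rw [mul_pow]
    field_simp
lemma good_of_le (hd : 3 ≤ d) {U Z : Set E} (hU : IsOpen U)
    {σ₀ : E → ℝ} (h₀ : IsDefiningFn σ₀ U Z) :
    ∀ j : ℕ, 1 ≤ j → j ≤ d → Good d j U Z := by
  intro j
  induction j with
  | zero => omega
  | succ n ih =>
    intro _ hnd
    rcases Nat.eq_zero_or_pos n with hn | hn
    · subst hn; exact base_case hd hU h₀
    · exact step_case hd hn (by omega) (ih hn (by omega))

end Aux

/-- every hypersurface `Σ` with a smooth defining function admits, on some
neighbourhood `V` of `Σ`, a defining function `σ` solving the singular Yamabe equation up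
to an order-`d` obstruction term: `S(σ) = 1 + σ^d · B` with `B` smooth. -/
theorem statement1 (d : ℕ) (hd : 3 ≤ d)
    (U Z : Set (EuclideanSpace ℝ (Fin d))) (hU : IsOpen U)
    (σ₀ : EuclideanSpace ℝ (Fin d) → ℝ) (h₀ : IsDefiningFn σ₀ U Z) :
    ∃ (V : Set (EuclideanSpace ℝ (Fin d))) (σ B : EuclideanSpace ℝ (Fin d) → ℝ),
      IsOpen V ∧ Z ⊆ V ∧ V ⊆ U ∧
      IsDefiningFn σ V Z ∧ ContDiffOn ℝ (⊤ : ℕ∞) B V ∧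
      ∀ x ∈ V, Scurv σ x = 1 + σ x ^ d * B x := by
  obtain ⟨V, σ, f, hV, hZV, hVU, hdef, hf, hS⟩ :=
    good_of_le hd hU h₀ d (by omega) le_rfl
  exact ⟨V, σ, f, hV, hZV, hVU, hdef, hf, hS⟩
end

section
/- Let d ≥ 3 and let σ be a smooth defining function for Σ on an open set U ⊆ ℝ^d with S(σ) > 0 everywhere on U. Set σ̂ := σ/√(S(σ)) and σ' := σ̂·(1 − (d/(4(d−1)))·(S(σ̂) − 1)). Then there exists a smooth function b on U such that S(σ') = 1 + σ² · b on U; in particular S(σ') − 1 vanishes to second order along Σ. (Flat-background case of the proposition producing a defining density unit to second order whose scale tractor restricts to the normal tractor.) -/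
open RealInnerProductSpace

namespace Statement5Aux

variable {d : ℕ}
local notation "E" => EuclideanSpace ℝ (Fin d)

variable {U : Set (EuclideanSpace ℝ (Fin d))} {f g : EuclideanSpace ℝ (Fin d) → ℝ}
  {x : EuclideanSpace ℝ (Fin d)}

lemma diffAt_of (hU : IsOpen U) (hf : ContDiffOn ℝ (⊤ : ℕ∞) f U) (hx : x ∈ U) :
    DifferentiableAt ℝ f x :=
  (hf.differentiableOn (by simp)).differentiableAt (hU.mem_nhds hx)

lemma contDiffOn_fderiv_apply (hU : IsOpen U) (hf : ContDiffOn ℝ (⊤ : ℕ∞) f U) (v : E) :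
    ContDiffOn ℝ (⊤ : ℕ∞) (fun x => fderiv ℝ f x v) U :=
  (ContinuousLinearMap.apply ℝ ℝ v).contDiff.comp_contDiffOn
    (hf.fderiv_of_isOpen hU (by simp))

lemma contDiffOn_gradient (hU : IsOpen U) (hf : ContDiffOn ℝ (⊤ : ℕ∞) f U) :
    ContDiffOn ℝ (⊤ : ℕ∞) (gradient f) U :=
  (InnerProductSpace.toDual ℝ (E)).symm.contDiff.comp_contDiffOn
    (hf.fderiv_of_isOpen hU (by simp))

lemma contDiffOn_flatLaplacian (hU : IsOpen U) (hf : ContDiffOn ℝ (⊤ : ℕ∞) f U) :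
    ContDiffOn ℝ (⊤ : ℕ∞) (flatLaplacian f) U := by
  unfold flatLaplacian
  exact ContDiffOn.sum fun i _ =>
    contDiffOn_fderiv_apply hU (contDiffOn_fderiv_apply hU hf _) _

lemma contDiffOn_Scurv (hU : IsOpen U) (hf : ContDiffOn ℝ (⊤ : ℕ∞) f U) :
    ContDiffOn ℝ (⊤ : ℕ∞) (Scurv f) U := by
  unfold Scurv
  have h1 : ContDiffOn ℝ (⊤ : ℕ∞) (fun x => ‖gradient f x‖ ^ 2) U := by
    have := ContDiffOn.inner ℝ (contDiffOn_gradient hU hf) (contDiffOn_gradient hU hf)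
    exact this.congr fun x _ => (real_inner_self_eq_norm_sq _).symm
  exact h1.sub ((contDiffOn_const.mul hf).div_const _ |>.mul
    (contDiffOn_flatLaplacian hU hf))

lemma inner_gradient_apply (f : E → ℝ) (x v : E) :
    ⟪gradient f x, v⟫ = fderiv ℝ f x v := by
  have : (InnerProductSpace.toDual ℝ (E)) (gradient f x) = fderiv ℝ f x :=
    (InnerProductSpace.toDual ℝ (E)).apply_symm_apply _
  rw [← this, InnerProductSpace.toDual_apply_apply]

lemma sum_fderiv_mul (f g : E → ℝ) (x : E) :
    ∑ i : Fin d, fderiv ℝ f x (EuclideanSpace.single i 1) * fderiv ℝ g x (EuclideanSpace.single i 1)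
      = ⟪gradient f x, gradient g x⟫ := by
  have h := (EuclideanSpace.basisFun (Fin d) ℝ).sum_inner_mul_inner (gradient f x) (gradient g x)
  rw [← h]
  refine Finset.sum_congr rfl fun i _ => ?_
  rw [← inner_gradient_apply f x, ← inner_gradient_apply g x, EuclideanSpace.basisFun_apply]
  rw [real_inner_comm (gradient g x)]

lemma gradient_mul' {f g : E → ℝ} {x : E} (hf : DifferentiableAt ℝ f x)
    (hg : DifferentiableAt ℝ g x) :
    gradient (fun y => f y * g y) x = f x • gradient g x + g x • gradient f x := by
  unfold gradient
  rw [fderiv_fun_mul hf hg, map_add, map_smul, map_smul]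

lemma gradient_const_mul' {f : E → ℝ} {x : E} (c : ℝ) (hf : DifferentiableAt ℝ f x) :
    gradient (fun y => c * f y) x = c • gradient f x := by
  unfold gradient
  rw [fderiv_const_mul hf, map_smul]

lemma gradient_const_sub' (f : E → ℝ) (x : E) (c : ℝ) :
    gradient (fun y => c - f y) x = - gradient f x := by
  unfold gradient
  rw [fderiv_const_sub, map_neg]

lemma flatLaplacian_mul (hU : IsOpen U) (hf : ContDiffOn ℝ (⊤ : ℕ∞) f U)
    (hg : ContDiffOn ℝ (⊤ : ℕ∞) g U) (hx : x ∈ U) :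
    flatLaplacian (fun y => f y * g y) x
      = f x * flatLaplacian g x + 2 * ⟪gradient f x, gradient g x⟫
        + g x * flatLaplacian f x := by
  have key : ∀ v : E,
      fderiv ℝ (fun y => fderiv ℝ (fun z => f z * g z) y v) x v
        = f x * fderiv ℝ (fun y => fderiv ℝ g y v) x v
          + fderiv ℝ g x v * fderiv ℝ f x v
          + (g x * fderiv ℝ (fun y => fderiv ℝ f y v) x v
          + fderiv ℝ f x v * fderiv ℝ g x v) := by
    intro v
    have hDf : DifferentiableAt ℝ (fun y => fderiv ℝ f y v) x :=
      diffAt_of hU (contDiffOn_fderiv_apply hU hf v) hx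
    have hDg : DifferentiableAt ℝ (fun y => fderiv ℝ g y v) x :=
      diffAt_of hU (contDiffOn_fderiv_apply hU hg v) hx
    have hfx := diffAt_of hU hf hx
    have hgx := diffAt_of hU hg hx
    have hev : (fun y => fderiv ℝ (fun z => f z * g z) y v)
        =ᶠ[nhds x] (fun y => f y * fderiv ℝ g y v + g y * fderiv ℝ f y v) := by
      filter_upwards [hU.mem_nhds hx] with y hy
      rw [fderiv_fun_mul (diffAt_of hU hf hy) (diffAt_of hU hg hy)]
      simp
    rw [hev.fderiv_eq]
    rw [fderiv_fun_add (f := fun y => f y * fderiv ℝ g y v) (g := fun y => g y * fderiv ℝ f y v)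
      (hfx.mul hDg) (hgx.mul hDf), fderiv_fun_mul hfx hDg, fderiv_fun_mul hgx hDf]
    simp [mul_comm]
  unfold flatLaplacian
  rw [Finset.sum_congr rfl fun i _ => key (EuclideanSpace.single i 1)]
  simp only [Finset.sum_add_distrib, ← Finset.mul_sum]
  rw [sum_fderiv_mul g f, sum_fderiv_mul f g, real_inner_comm (gradient g x)]
  ring

lemma Scurv_mul (hU : IsOpen U) (hf : ContDiffOn ℝ (⊤ : ℕ∞) f U)
    (hg : ContDiffOn ℝ (⊤ : ℕ∞) g U) (hx : x ∈ U) :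
    Scurv (fun y => f y * g y) x
      = g x ^ 2 * Scurv f x + f x ^ 2 * Scurv g x
        + 2 * (1 - 2 / (d : ℝ)) * (f x * g x) * ⟪gradient f x, gradient g x⟫ := by
  have hfx := diffAt_of hU hf hx
  have hgx := diffAt_of hU hg hx
  unfold Scurv
  rw [flatLaplacian_mul hU hf hg hx, gradient_mul' hfx hgx]
  rw [norm_add_sq_real, norm_smul, norm_smul, real_inner_smul_left, real_inner_smul_right]
  simp only [Real.norm_eq_abs, mul_pow, sq_abs, real_inner_comm (gradient g x)]
  ring

end Statement5Aux

set_option maxHeartbeats 2000000 in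
/-- with `σ̂ := σ/√(S(σ))` and
`σ' := σ̂·(1 − (d/(4(d−1)))·(S(σ̂) − 1))`, one has `S(σ') = 1 + σ²·b` for some smooth
`b`, i.e. `S(σ') − 1` vanishes to second order along `Z`. -/
theorem statement5 (d : ℕ) (hd : 3 ≤ d)
    (U Z : Set (EuclideanSpace ℝ (Fin d))) (hU : IsOpen U)
    (σ : EuclideanSpace ℝ (Fin d) → ℝ) (hσ : IsDefiningFn σ U Z)
    (hS : ∀ x ∈ U, 0 < Scurv σ x)
    (σhat σ' : EuclideanSpace ℝ (Fin d) → ℝ)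
    (hσhat : σhat = fun x => σ x / Real.sqrt (Scurv σ x))
    (hσ' : σ' = fun x =>
      σhat x * (1 - ((d : ℝ) / (4 * ((d : ℝ) - 1))) * (Scurv σhat x - 1))) :
    ∃ b : EuclideanSpace ℝ (Fin d) → ℝ, ContDiffOn ℝ (⊤ : ℕ∞) b U ∧
      ∀ x ∈ U, Scurv σ' x = 1 + σ x ^ 2 * b x := by
  open Statement5Aux in
  obtain ⟨hσU, -, -⟩ := hσ
  have hd3 : (3 : ℝ) ≤ (d : ℝ) := by exact_mod_cast hd
  have hd0 : (d : ℝ) ≠ 0 := by intro h; rw [h] at hd3; linarith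
  have hd1 : (d : ℝ) - 1 ≠ 0 := by intro h; nlinarith
  obtain ⟨g1, hg1def⟩ : ∃ g1 : EuclideanSpace ℝ (Fin d) → ℝ,
      g1 = fun y => (Real.sqrt (Scurv σ y))⁻¹ := ⟨_, rfl⟩
  have hSsm := contDiffOn_Scurv hU hσU
  have hg1sm : ContDiffOn ℝ (⊤ : ℕ∞) g1 U := by
    rw [hg1def]
    intro y hy
    exact ((Real.contDiffAt_sqrt (ne_of_gt (hS y hy))).comp_contDiffWithinAt y
      (hSsm y hy)).inv (ne_of_gt (Real.sqrt_pos.mpr (hS y hy)))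
  have hσhateq : σhat = fun y => σ y * g1 y := by
    funext y; rw [hσhat, hg1def]; exact div_eq_mul_inv _ _
  have hσhatsm : ContDiffOn ℝ (⊤ : ℕ∞) σhat U := by rw [hσhateq]; exact hσU.mul hg1sm
  obtain ⟨A, hAdef⟩ : ∃ A : EuclideanSpace ℝ (Fin d) → ℝ,
      A = fun y => σ y * Scurv g1 y
        + 2 * (1 - 2 / (d : ℝ)) * g1 y * ⟪gradient σ y, gradient g1 y⟫ := ⟨_, rfl⟩
  have hAsm : ContDiffOn ℝ (⊤ : ℕ∞) A U := by
    rw [hAdef]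
    exact (hσU.mul (contDiffOn_Scurv hU hg1sm)).add ((contDiffOn_const.mul hg1sm).mul
      (ContDiffOn.inner ℝ (contDiffOn_gradient hU hσU) (contDiffOn_gradient hU hg1sm)))
  have hg1sq : ∀ y ∈ U, g1 y ^ 2 * Scurv σ y = 1 := by
    intro y hy
    rw [hg1def]
    simp only
    rw [inv_pow, Real.sq_sqrt (hS y hy).le]
    exact inv_mul_cancel₀ (ne_of_gt (hS y hy))
  have hshat : ∀ y ∈ U, Scurv σhat y = 1 + σ y * A y := by
    intro y hy
    rw [hσhateq, Scurv_mul hU hσU hg1sm hy, hg1sq y hy, hAdef]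
    ring
  obtain ⟨G, hGdef⟩ : ∃ G : EuclideanSpace ℝ (Fin d) → ℝ,
      G = fun y => g1 y * (1 - (d : ℝ) / (4 * ((d : ℝ) - 1)) * (Scurv σhat y - 1)) :=
    ⟨_, rfl⟩
  have hGsm : ContDiffOn ℝ (⊤ : ℕ∞) G U := by
    rw [hGdef]
    exact hg1sm.mul (contDiffOn_const.sub (contDiffOn_const.mul
      ((contDiffOn_Scurv hU hσhatsm).sub contDiffOn_const)))
  have hσ'eq : σ' = fun y => σ y * G y := by
    funext y; simp only [hσ', hGdef, hσhateq]; ring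
  have hGU : ∀ y ∈ U, G y
      = g1 y * (1 - (d : ℝ) / (4 * ((d : ℝ) - 1)) * (σ y * A y)) := by
    intro y hy; simp only [hGdef]; rw [hshat y hy]; ring
  obtain ⟨b, hbdef⟩ : ∃ b : EuclideanSpace ℝ (Fin d) → ℝ, b = fun y =>
      ((d : ℝ) / (4 * ((d : ℝ) - 1))) ^ 2 * A y ^ 2 + Scurv G y
        - 2 * ((d : ℝ) / (4 * ((d : ℝ) - 1))) * A y ^ 2
        + ((d : ℝ) / (4 * ((d : ℝ) - 1))) ^ 2 * σ y * A y ^ 3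
        - Scurv g1 y * (1 - (d : ℝ) / (4 * ((d : ℝ) - 1)) * (σ y * A y)) ^ 2
        + 2 * (1 - 2 / (d : ℝ)) * ((d : ℝ) / (4 * ((d : ℝ) - 1))) ^ 2 * A y ^ 2
        - 4 * (1 - 2 / (d : ℝ)) * ((d : ℝ) / (4 * ((d : ℝ) - 1))) * A y
          * (1 - (d : ℝ) / (4 * ((d : ℝ) - 1)) * (σ y * A y)) * flatLaplacian σ y
          * ((d : ℝ) * Scurv σ y)⁻¹
        - 2 * (1 - 2 / (d : ℝ)) * ((d : ℝ) / (4 * ((d : ℝ) - 1))) * (Scurv σ y)⁻¹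
          * (1 - (d : ℝ) / (4 * ((d : ℝ) - 1)) * (σ y * A y))
          * ⟪gradient σ y, gradient A y⟫ := ⟨_, rfl⟩
  refine ⟨b, ?_, ?_⟩
  · rw [hbdef]
    have hbr : ContDiffOn ℝ (⊤ : ℕ∞)
        (fun y => 1 - (d : ℝ) / (4 * ((d : ℝ) - 1)) * (σ y * A y)) U :=
      contDiffOn_const.sub (contDiffOn_const.mul (hσU.mul hAsm))
    have hA2 : ContDiffOn ℝ (⊤ : ℕ∞) (fun y => A y ^ 2) U := hAsm.pow 2
    have hA3 : ContDiffOn ℝ (⊤ : ℕ∞) (fun y => A y ^ 3) U := hAsm.pow 3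
    have hSG := contDiffOn_Scurv hU hGsm
    have hT := contDiffOn_Scurv hU hg1sm
    have hL := contDiffOn_flatLaplacian hU hσU
    have hR := ContDiffOn.inner ℝ (contDiffOn_gradient hU hσU) (contDiffOn_gradient hU hAsm)
    have hSinv : ContDiffOn ℝ (⊤ : ℕ∞) (fun y => (Scurv σ y)⁻¹) U :=
      hSsm.inv fun y hy => ne_of_gt (hS y hy)
    have hdSinv : ContDiffOn ℝ (⊤ : ℕ∞) (fun y => ((d : ℝ) * Scurv σ y)⁻¹) U :=
      (contDiffOn_const.mul hSsm).inv fun y hy =>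
        mul_ne_zero hd0 (ne_of_gt (hS y hy))
    exact ((((((contDiffOn_const.mul hA2).add hSG).sub (contDiffOn_const.mul hA2)).add
      ((contDiffOn_const.mul hσU).mul hA3)).sub (hT.mul (hbr.pow 2))).add
      (contDiffOn_const.mul hA2)).sub
      (((((contDiffOn_const.mul hAsm).mul hbr).mul hL).mul hdSinv)) |>.sub
      ((((contDiffOn_const.mul hSinv).mul hbr).mul hR))
  · intro x hx
    have dσ := diffAt_of hU hσU hx
    have dA := diffAt_of hU hAsm hx
    have dg1 := diffAt_of hU hg1sm hx
    have dbr : DifferentiableAt ℝ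
        (fun y => 1 - (d : ℝ) / (4 * ((d : ℝ) - 1)) * (σ y * A y)) x :=
      ((dσ.mul dA).const_mul _).const_sub _
    have hQ : ‖gradient σ x‖ ^ 2
        = Scurv σ x + 2 * σ x / (d : ℝ) * flatLaplacian σ x := by
      simp only [Scurv]; ring
    have h1 : Scurv σ' x = G x ^ 2 * Scurv σ x + σ x ^ 2 * Scurv G x
        + 2 * (1 - 2 / (d : ℝ)) * (σ x * G x) * ⟪gradient σ x, gradient G x⟫ := by
      rw [hσ'eq]; exact Scurv_mul hU hσU hGsm hx
    have hev : G =ᶠ[nhds x]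
        fun y => g1 y * (1 - (d : ℝ) / (4 * ((d : ℝ) - 1)) * (σ y * A y)) := by
      filter_upwards [hU.mem_nhds hx] with y hy
      exact hGU y hy
    have hgradG : gradient G x
        = g1 x • (-(((d : ℝ) / (4 * ((d : ℝ) - 1)))
            • (σ x • gradient A x + A x • gradient σ x)))
          + (1 - (d : ℝ) / (4 * ((d : ℝ) - 1)) * (σ x * A x)) • gradient g1 x := by
      rw [hev.gradient_eq, gradient_mul' dg1 dbr,
        gradient_const_sub' (fun y => (d : ℝ) / (4 * ((d : ℝ) - 1)) * (σ y * A y)) x 1,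
        gradient_const_mul' (f := fun y => σ y * A y) _ (dσ.mul dA), gradient_mul' dσ dA]
    have hAval : A x = σ x * Scurv g1 x
        + 2 * (1 - 2 / (d : ℝ)) * g1 x * ⟪gradient σ x, gradient g1 x⟫ := by
      rw [hAdef]
    have hg1val : g1 x = (Real.sqrt (Scurv σ x))⁻¹ := by rw [hg1def]
    rw [h1, hbdef, hGU x hx, hgradG]
    simp only [inner_add_right, real_inner_smul_right, inner_neg_right,
      real_inner_self_eq_norm_sq]
    rw [hQ, hAval, hg1val]
    have hsq : Real.sqrt (Scurv σ x) ^ 2 = Scurv σ x := Real.sq_sqrt (hS x hx).le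
    have hqne : Real.sqrt (Scurv σ x) ≠ 0 := Real.sqrt_ne_zero'.mpr (hS x hx)
    generalize hq : Real.sqrt (Scurv σ x) = q at hsq hqne ⊢
    rw [← hsq]
    generalize ⟪gradient σ x, gradient g1 x⟫ = P
    generalize ⟪gradient σ x, gradient A x⟫ = R
    generalize Scurv G x = SG
    generalize Scurv g1 x = T
    generalize flatLaplacian σ x = L
    generalize σ x = s
    generalize hD : (d : ℝ) = D at hd0 hd1 ⊢
    field_simp
    ring
end

section
/- Let d ≥ 3, let U ⊆ ℝ^d be open, and let σ be a smooth function on U with S(σ) ≡ 0 on U. If p ∈ U satisfies σ(p) = 0 and Δσ(p) ≠ 0, then ∇σ(p) = 0, the Hessian of σ at p equals (Δσ(p)/d) times the identity, and p is an isolated zero of σ. (Flat-background case of the statement that when the S-curvature vanishes identically, only isolated zeros of the scale are possible.) -/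
open RealInnerProductSpace

/- ----------------- auxiliary lemmas ----------------- -/

lemma aux_grad_inner {d : ℕ} (σ : EuclideanSpace ℝ (Fin d) → ℝ) (x v : EuclideanSpace ℝ (Fin d)) :
    fderiv ℝ σ x v = ⟪gradient σ x, v⟫ := by
  rw [gradient, InnerProductSpace.toDual_symm_apply]

lemma aux_fderiv_fun_eq {d : ℕ} (σ : EuclideanSpace ℝ (Fin d) → ℝ)
    (w : EuclideanSpace ℝ (Fin d)) :
    (fun y => fderiv ℝ σ y w) = fun y => (innerSL ℝ w) (gradient σ y) := by
  funext y
  rw [aux_grad_inner σ y w, innerSL_apply_apply, real_inner_comm]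

lemma aux_fderiv_apply_eq {d : ℕ} (σ : EuclideanSpace ℝ (Fin d) → ℝ)
    (x : EuclideanSpace ℝ (Fin d)) (hdiff : DifferentiableAt ℝ (gradient σ) x)
    (w : EuclideanSpace ℝ (Fin d)) :
    fderiv ℝ (fun y => fderiv ℝ σ y w) x = (innerSL ℝ w).comp (fderiv ℝ (gradient σ) x) := by
  rw [aux_fderiv_fun_eq σ w]
  exact ((innerSL ℝ w).hasFDerivAt.comp x hdiff.hasFDerivAt).fderiv

lemma aux_eigen {d : ℕ} (M : EuclideanSpace ℝ (Fin d) →L[ℝ] EuclideanSpace ℝ (Fin d))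
    (lam : ℝ) (hlam : lam ≠ 0)
    (hC : ∀ v w, ⟪M v, M w⟫ = lam * ⟪w, M v⟫)
    (htr : ∑ i : Fin d, ⟪EuclideanSpace.single i (1:ℝ), M (EuclideanSpace.single i 1)⟫ = d * lam) :
    ∀ v, M v = lam • v := by
  set e : Fin d → EuclideanSpace ℝ (Fin d) := fun i => EuclideanSpace.single i (1:ℝ) with he
  have hnorme : ∀ i, ‖e i‖ = 1 := by intro i; simp [he, EuclideanSpace.norm_single]
  -- squared norm of T u := M u - (lam/2) • u
  have hT : ∀ u, ‖M u - (lam/2) • u‖^2 = (lam/2)^2 * ‖u‖^2 := by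
    intro u
    rw [norm_sub_sq_real, real_inner_smul_right, norm_smul]
    have h1 : ⟪M u, M u⟫ = lam * ⟪u, M u⟫ := hC u u
    have h2 : ‖M u‖^2 = lam * ⟪u, M u⟫ := by rw [← real_inner_self_eq_norm_sq]; exact h1
    have h3 : ⟪M u, u⟫ = ⟪u, M u⟫ := real_inner_comm _ _
    rw [h2, h3]
    rw [mul_pow]
    have : ‖(lam/2)‖^2 = (lam/2)^2 := by rw [Real.norm_eq_abs, sq_abs]
    rw [this]; ring
  set t : Fin d → ℝ := fun i => ⟪e i, M (e i)⟫ - lam/2 with ht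
  have htsq : ∀ i, (t i)^2 ≤ (lam/2)^2 := by
    intro i
    have hcs := real_inner_mul_inner_self_le (M (e i) - (lam/2) • (e i)) (e i)
    have h1 : ⟪M (e i) - (lam/2) • (e i), e i⟫ = t i := by
      have h2 : ⟪e i, e i⟫ = (1:ℝ) := by
        rw [real_inner_self_eq_norm_sq, hnorme i]; norm_num
      show ⟪M (e i) - (lam/2) • (e i), e i⟫ = ⟪e i, M (e i)⟫ - lam/2
      rw [inner_sub_left, real_inner_smul_left, real_inner_comm (e i) (M (e i)), h2]
      ring
    have h2 : ⟪M (e i) - (lam/2) • (e i), M (e i) - (lam/2) • (e i)⟫ = (lam/2)^2 := by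
      rw [real_inner_self_eq_norm_sq, hT (e i), hnorme i]; norm_num
    have h3 : ⟪e i, e i⟫ = 1 := by rw [real_inner_self_eq_norm_sq, hnorme i]; norm_num
    rw [h1, h2, h3] at hcs
    nlinarith [hcs]
  have hsum : ∑ i : Fin d, t i = d * (lam/2) := by
    rw [ht]
    simp only [Finset.sum_sub_distrib, he, htr, Finset.sum_const, Finset.card_univ, Fintype.card_fin,
      nsmul_eq_mul]
    ring
  -- each t i = lam/2
  have hti : ∀ i, t i = lam/2 := by
    rcases hlam.lt_or_gt with hneg | hpos
    · -- lam < 0 : t i ≥ lam/2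
      have hge : ∀ i, lam/2 ≤ t i := by
        intro i; nlinarith [htsq i]
      have h0 : ∑ i : Fin d, (t i - lam/2) = 0 := by
        rw [Finset.sum_sub_distrib, hsum]; simp
      intro i
      have := (Finset.sum_eq_zero_iff_of_nonneg (fun j _ => by linarith [hge j])).mp h0 i
        (Finset.mem_univ i)
      linarith
    · have hle : ∀ i, t i ≤ lam/2 := by
        intro i; nlinarith [htsq i]
      have h0 : ∑ i : Fin d, (lam/2 - t i) = 0 := by
        rw [Finset.sum_sub_distrib, hsum]; simp
      intro i
      have := (Finset.sum_eq_zero_iff_of_nonneg (fun j _ => by linarith [hle j])).mp h0 i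
        (Finset.mem_univ i)
      linarith
  -- M e i = lam • e i
  have hbasis : ∀ i, M (e i) = lam • e i := by
    intro i
    have h2 : ⟪e i, e i⟫ = (1:ℝ) := by rw [real_inner_self_eq_norm_sq, hnorme i]; norm_num
    have hMe : ⟪e i, M (e i)⟫ = lam := by
      have h := hti i
      have h' : ⟪e i, M (e i)⟫ - lam/2 = lam/2 := h
      linarith
    have hip : ⟪M (e i) - (lam/2) • e i, (lam/2) • e i⟫ = (lam/2)^2 := by
      rw [real_inner_smul_right, inner_sub_left, real_inner_smul_left,
        real_inner_comm (e i) (M (e i)), hMe, h2]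
      ring
    have hz : ‖(M (e i) - (lam/2) • e i) - (lam/2) • e i‖^2 = 0 := by
      rw [norm_sub_sq_real, hT (e i), hip, norm_smul, hnorme i, Real.norm_eq_abs, mul_pow,
        sq_abs]
      ring
    have hz0 : M (e i) - (lam/2) • e i - (lam/2) • e i = 0 :=
      norm_eq_zero.mp ((pow_eq_zero_iff (n := 2) (by norm_num)).mp hz)
    have : M (e i) = (lam/2) • e i + (lam/2) • e i := by
      rw [sub_sub, sub_eq_zero] at hz0
      rw [hz0]
    rw [this, ← add_smul]
    norm_num
  -- conclude via basis
  intro v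
  have hlin : (M : EuclideanSpace ℝ (Fin d) →ₗ[ℝ] EuclideanSpace ℝ (Fin d))
      = lam • (LinearMap.id) := by
    apply Module.Basis.ext (EuclideanSpace.basisFun (Fin d) ℝ).toBasis
    intro i
    simp only [OrthonormalBasis.coe_toBasis, EuclideanSpace.basisFun_apply,
      ContinuousLinearMap.coe_coe, LinearMap.smul_apply, LinearMap.id_apply]
    exact hbasis i
  calc M v = (M : EuclideanSpace ℝ (Fin d) →ₗ[ℝ] EuclideanSpace ℝ (Fin d)) v := rfl
    _ = lam • v := by rw [hlin]; rfl


set_option maxHeartbeats 1600000 in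
/-- if `S(σ) ≡ 0` on `U` and `p` is a zero of `σ` with `Δσ(p) ≠ 0`, then
`∇σ(p) = 0`, the Hessian of `σ` at `p` is `(Δσ(p)/d)` times the identity bilinear form,
and `p` is an isolated zero of `σ`. -/
theorem statement6 (d : ℕ) (hd : 3 ≤ d)
    (U : Set (EuclideanSpace ℝ (Fin d))) (hU : IsOpen U)
    (σ : EuclideanSpace ℝ (Fin d) → ℝ) (hσ : ContDiffOn ℝ (⊤ : ℕ∞) σ U)
    (hS : ∀ x ∈ U, Scurv σ x = 0)
    (p : EuclideanSpace ℝ (Fin d)) (hp : p ∈ U) (hp0 : σ p = 0)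
    (hΔ : flatLaplacian σ p ≠ 0) :
    gradient σ p = 0 ∧
    (∀ v w : EuclideanSpace ℝ (Fin d),
      fderiv ℝ (fun y => fderiv ℝ σ y v) p w = (flatLaplacian σ p / d) * ⟪v, w⟫) ∧
    ∃ ε > (0 : ℝ), ∀ x ∈ Metric.ball p ε ∩ U, σ x = 0 → x = p := by
  have hd0 : (d : ℝ) ≠ 0 := Nat.cast_ne_zero.mpr (by omega)
  have h1top : ((⊤:ℕ∞) : WithTop ℕ∞) ≠ 0 := by simp
  have hptop : ((⊤:ℕ∞) : WithTop ℕ∞) + 1 ≤ ((⊤:ℕ∞) : WithTop ℕ∞) := by norm_num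
  have hσx : ∀ x ∈ U, ContDiffAt ℝ (⊤:ℕ∞) σ x := fun x hx => hσ.contDiffAt (hU.mem_nhds hx)
  have hGx : ∀ x ∈ U, ContDiffAt ℝ (⊤:ℕ∞) (gradient σ) x := by
    intro x hx
    have h1 : ContDiffAt ℝ (⊤:ℕ∞) (fderiv ℝ σ) x := (hσx x hx).fderiv_right hptop
    have h2 : gradient σ = fun y =>
        (InnerProductSpace.toDual ℝ (EuclideanSpace ℝ (Fin d))).symm (fderiv ℝ σ y) := rfl
    rw [h2]
    exact (((InnerProductSpace.toDual ℝ
      (EuclideanSpace ℝ (Fin d))).symm.toContinuousLinearEquiv.toContinuousLinearMap).contDiff.comp_contDiffAt x h1)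
  have hMx : ∀ x ∈ U, ContDiffAt ℝ (⊤:ℕ∞) (fderiv ℝ (gradient σ)) x :=
    fun x hx => (hGx x hx).fderiv_right hptop
  set M : EuclideanSpace ℝ (Fin d) → (EuclideanSpace ℝ (Fin d) →L[ℝ] EuclideanSpace ℝ (Fin d)) :=
    fderiv ℝ (gradient σ) with hMdef
  set Lam : EuclideanSpace ℝ (Fin d) → ℝ := fun x => ∑ i : Fin d,
    ⟪(EuclideanSpace.single i 1 : EuclideanSpace ℝ (Fin d)), M x (EuclideanSpace.single i 1)⟫
    with hLamdef
  have hLamx : ∀ x ∈ U, ContDiffAt ℝ (⊤:ℕ∞) Lam x := by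
    intro x hx
    apply ContDiffAt.sum
    intro i _
    exact (contDiffAt_const (c := (EuclideanSpace.single i 1 : EuclideanSpace ℝ (Fin d)))).inner ℝ
      ((hMx x hx).clm_apply contDiffAt_const)
  have hLapLam : ∀ x ∈ U, flatLaplacian σ x = Lam x := by
    intro x hx
    unfold flatLaplacian
    apply Finset.sum_congr rfl
    intro i _
    rw [aux_fderiv_apply_eq σ x ((hGx x hx).differentiableAt h1top)]
    simp [innerSL_apply_apply]
    rfl
  have hA : ∀ x ∈ U, ⟪gradient σ x, gradient σ x⟫ = 2 / d * (σ x * Lam x) := by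
    intro x hx
    have h1 := hS x hx
    rw [Scurv, hLapLam x hx] at h1
    rw [real_inner_self_eq_norm_sq]
    linear_combination h1
  have hGp : gradient σ p = 0 := by
    have h1 := hA p hp
    rw [hp0] at h1
    simp only [mul_zero, zero_mul] at h1
    exact inner_self_eq_zero.mp h1
  have hf1p : fderiv ℝ σ p = 0 := by
    ext v
    rw [aux_grad_inner σ p v, hGp, ContinuousLinearMap.zero_apply, inner_zero_left]
  -- first derivative of the identity on U
  have hB : ∀ x ∈ U, ∀ w, ⟪gradient σ x, M x w⟫
      = 1 / d * (fderiv ℝ σ x w * Lam x + σ x * fderiv ℝ Lam x w) := by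
    intro x hx w
    have hGd : DifferentiableAt ℝ (gradient σ) x := (hGx x hx).differentiableAt h1top
    have hσd : DifferentiableAt ℝ σ x := (hσx x hx).differentiableAt h1top
    have hΛd : DifferentiableAt ℝ Lam x := (hLamx x hx).differentiableAt h1top
    have hq : HasFDerivAt (fun y => ⟪gradient σ y, gradient σ y⟫)
        ((fderivInnerCLM ℝ (gradient σ x, gradient σ x)).comp ((M x).prod (M x))) x :=
      hGd.hasFDerivAt.inner ℝ hGd.hasFDerivAt
    have hρ : HasFDerivAt (fun y => 2 / (d:ℝ) * (σ y * Lam y))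
        ((2 / (d:ℝ)) • (σ x • fderiv ℝ Lam x + Lam x • fderiv ℝ σ x)) x :=
      (hσd.hasFDerivAt.mul hΛd.hasFDerivAt).const_mul _
    have heq : (fun y => ⟪gradient σ y, gradient σ y⟫)
        =ᶠ[nhds x] (fun y => 2 / (d:ℝ) * (σ y * Lam y)) :=
      Filter.eventuallyEq_of_mem (hU.mem_nhds hx) (fun y hy => hA y hy)
    have h3 : (fderivInnerCLM ℝ (gradient σ x, gradient σ x)).comp ((M x).prod (M x))
        = (2 / (d:ℝ)) • (σ x • fderiv ℝ Lam x + Lam x • fderiv ℝ σ x) := by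
      rw [← hq.fderiv, ← hρ.fderiv, heq.fderiv_eq]
    have h4 := congrArg (fun (L : EuclideanSpace ℝ (Fin d) →L[ℝ] ℝ) => L w) h3
    simp only [ContinuousLinearMap.comp_apply, ContinuousLinearMap.prod_apply,
      fderivInnerCLM_apply, ContinuousLinearMap.smul_apply, ContinuousLinearMap.add_apply,
      smul_eq_mul] at h4
    have hcomm : ⟪M x w, gradient σ x⟫ = ⟪gradient σ x, M x w⟫ := real_inner_comm _ _
    linear_combination h4 / 2 - hcomm / 2
  -- second derivative at p
  have hC : ∀ v w, ⟪M p v, M p w⟫ = Lam p / d * ⟪w, M p v⟫ := by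
    intro v w
    have hGd : DifferentiableAt ℝ (gradient σ) p := (hGx p hp).differentiableAt h1top
    have hσd : DifferentiableAt ℝ σ p := (hσx p hp).differentiableAt h1top
    have hΛd : DifferentiableAt ℝ Lam p := (hLamx p hp).differentiableAt h1top
    have hMd : DifferentiableAt ℝ M p := (hMx p hp).differentiableAt h1top
    have hMwd : HasFDerivAt (fun x => M x w) ((fderiv ℝ M p).flip w) p := by
      have h0 := hMd.hasFDerivAt.clm_apply (hasFDerivAt_const w p)
      have : (M p).comp (0 : EuclideanSpace ℝ (Fin d) →L[ℝ] EuclideanSpace ℝ (Fin d))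
          + (fderiv ℝ M p).flip w = (fderiv ℝ M p).flip w := by
        ext u; simp
      rwa [this] at h0
    have hlhs : HasFDerivAt (fun x => ⟪gradient σ x, M x w⟫)
        ((fderivInnerCLM ℝ (gradient σ p, M p w)).comp ((M p).prod ((fderiv ℝ M p).flip w))) p :=
      hGd.hasFDerivAt.inner ℝ hMwd
    have hw1 : HasFDerivAt (fun x => fderiv ℝ σ x w) ((innerSL ℝ w).comp (M p)) p := by
      rw [aux_fderiv_fun_eq σ w]
      exact (innerSL ℝ w).hasFDerivAt.comp p hGd.hasFDerivAt
    have hΛDd : DifferentiableAt ℝ (fderiv ℝ Lam) p :=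
      ((hLamx p hp).fderiv_right hptop).differentiableAt h1top
    have hw2 : HasFDerivAt (fun x => fderiv ℝ Lam x w) ((fderiv ℝ (fderiv ℝ Lam) p).flip w) p := by
      have h0 := hΛDd.hasFDerivAt.clm_apply (hasFDerivAt_const w p)
      have : (fderiv ℝ Lam p).comp (0 : EuclideanSpace ℝ (Fin d) →L[ℝ] EuclideanSpace ℝ (Fin d))
          + (fderiv ℝ (fderiv ℝ Lam) p).flip w = (fderiv ℝ (fderiv ℝ Lam) p).flip w := by
        ext u; simp
      rwa [this] at h0
    have hrhs : HasFDerivAt (fun x => 1 / (d:ℝ) * (fderiv ℝ σ x w * Lam x + σ x * fderiv ℝ Lam x w))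
        ((1 / (d:ℝ)) • ((fderiv ℝ σ p w • fderiv ℝ Lam p + Lam p • ((innerSL ℝ w).comp (M p)))
          + (σ p • (fderiv ℝ (fderiv ℝ Lam) p).flip w + fderiv ℝ Lam p w • fderiv ℝ σ p))) p :=
      ((hw1.mul hΛd.hasFDerivAt).add (hσd.hasFDerivAt.mul hw2)).const_mul _
    have heq : (fun x => ⟪gradient σ x, M x w⟫)
        =ᶠ[nhds p] (fun x => 1 / (d:ℝ) * (fderiv ℝ σ x w * Lam x + σ x * fderiv ℝ Lam x w)) :=
      Filter.eventuallyEq_of_mem (hU.mem_nhds hp) (fun y hy => hB y hy w)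
    have h3 : (fderivInnerCLM ℝ (gradient σ p, M p w)).comp ((M p).prod ((fderiv ℝ M p).flip w))
        = (1 / (d:ℝ)) • ((fderiv ℝ σ p w • fderiv ℝ Lam p + Lam p • ((innerSL ℝ w).comp (M p)))
          + (σ p • (fderiv ℝ (fderiv ℝ Lam) p).flip w + fderiv ℝ Lam p w • fderiv ℝ σ p)) := by
      rw [← hlhs.fderiv, ← hrhs.fderiv, heq.fderiv_eq]
    have h4 := congrArg (fun (L : EuclideanSpace ℝ (Fin d) →L[ℝ] ℝ) => L v) h3
    simp only [ContinuousLinearMap.comp_apply, ContinuousLinearMap.prod_apply,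
      fderivInnerCLM_apply, ContinuousLinearMap.smul_apply, ContinuousLinearMap.add_apply,
      smul_eq_mul, hGp, hf1p, hp0, ContinuousLinearMap.zero_apply, inner_zero_left,
      ContinuousLinearMap.flip_apply, innerSL_apply_apply, zero_mul, mul_zero, zero_add, add_zero] at h4
    linear_combination h4
  -- the eigenvalue
  set lam : ℝ := Lam p / d with hlamdef
  have hLamp : Lam p = flatLaplacian σ p := (hLapLam p hp).symm
  have hlamne : lam ≠ 0 := by
    rw [hlamdef, hLamp]
    exact div_ne_zero hΔ hd0
  have htr : ∑ i : Fin d,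
      ⟪(EuclideanSpace.single i 1 : EuclideanSpace ℝ (Fin d)), M p (EuclideanSpace.single i 1)⟫
      = d * lam := by
    have hsum : (∑ i : Fin d,
        ⟪(EuclideanSpace.single i 1 : EuclideanSpace ℝ (Fin d)), M p (EuclideanSpace.single i 1)⟫)
        = Lam p := rfl
    rw [hsum, hlamdef, mul_div_cancel₀ _ hd0]
  have heig : ∀ v, M p v = lam • v := aux_eigen (M p) lam hlamne (fun v w => hC v w) htr
  refine ⟨hGp, ?_, ?_⟩
  · intro v w
    rw [aux_fderiv_apply_eq σ p ((hGx p hp).differentiableAt h1top) v]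
    rw [ContinuousLinearMap.comp_apply, innerSL_apply_apply, heig w, real_inner_smul_right]
    rw [← hMdef] at *
    rw [hlamdef, hLamp]
  · -- isolated zero
    have hstrict : HasStrictFDerivAt (gradient σ) (M p) p :=
      (hGx p hp).hasStrictFDerivAt h1top
    have hleft : Function.LeftInverse
        ⇑(lam⁻¹ • ContinuousLinearMap.id ℝ (EuclideanSpace ℝ (Fin d)))
        ⇑(lam • ContinuousLinearMap.id ℝ (EuclideanSpace ℝ (Fin d))) := by
      intro v
      simp only [ContinuousLinearMap.smul_apply, ContinuousLinearMap.id_apply, smul_smul]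
      rw [inv_mul_cancel₀ hlamne, one_smul]
    have hright : Function.RightInverse
        ⇑(lam⁻¹ • ContinuousLinearMap.id ℝ (EuclideanSpace ℝ (Fin d)))
        ⇑(lam • ContinuousLinearMap.id ℝ (EuclideanSpace ℝ (Fin d))) := by
      intro v
      simp only [ContinuousLinearMap.smul_apply, ContinuousLinearMap.id_apply, smul_smul]
      rw [mul_inv_cancel₀ hlamne, one_smul]
    set Φ : EuclideanSpace ℝ (Fin d) ≃L[ℝ] EuclideanSpace ℝ (Fin d) :=
      ContinuousLinearEquiv.equivOfInverse _ _ hleft hright with hΦ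
    have hΦcoe : ((Φ : EuclideanSpace ℝ (Fin d) →L[ℝ] EuclideanSpace ℝ (Fin d))) = M p := by
      ext v
      have : (Φ : EuclideanSpace ℝ (Fin d) →L[ℝ] EuclideanSpace ℝ (Fin d)) v = lam • v := rfl
      rw [this, heig v]
    have hstrict' : HasStrictFDerivAt (gradient σ)
        ((Φ : EuclideanSpace ℝ (Fin d) →L[ℝ] EuclideanSpace ℝ (Fin d))) p := by
      rw [hΦcoe]; exact hstrict
    have hsrc : (hstrict'.toOpenPartialHomeomorph (gradient σ)).source ∈ nhds p :=
      (hstrict'.toOpenPartialHomeomorph (gradient σ)).open_source.mem_nhds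
        hstrict'.mem_toOpenPartialHomeomorph_source
    obtain ⟨ε, hε, hball⟩ := Metric.mem_nhds_iff.mp hsrc
    refine ⟨ε, hε, ?_⟩
    rintro x ⟨hxball, hxU⟩ hσx0
    have hGx0 : gradient σ x = 0 := by
      have h1 := hA x hxU
      rw [hσx0] at h1
      simp only [mul_zero, zero_mul] at h1
      exact inner_self_eq_zero.mp h1
    have hinj := (hstrict'.toOpenPartialHomeomorph (gradient σ)).injOn
    have hcoe := hstrict'.toOpenPartialHomeomorph_coe (f := gradient σ)
    apply hinj (hball hxball) (hball (Metric.mem_ball_self hε))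
    rw [hcoe]
    rw [hGx0, hGp]
end
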